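/- Assume the forms S_n pre-converge to S. Let w_n ∈ D(S_n) ∩ 𝓒 w-converge to w ∈ L²(E, ν) with sup_n ⟨A_n w_n, A_n w_n⟩_n < ∞, and let v_n ∈ D(S_n) ∩ 𝓒 s-converge to v ∈ D(S) in the sense of (ii) of pre-convergence (i.e. with sup_n ⟨A_n v_n, A_n v_n⟩_n < ∞ and limsup_n S_n(v_n, v_n) ≤ S(v, v)). Let β > 0 and suppose limsup_n S_{n,β}(w_n, w_n) < ∞. Then w ∈ D(S) and lim_{n→∞} (S_{n,β}(v_n, w_n) + S_{n,β}(w_n, v_n)) = S_β(v, w) + S_β(w, v). -/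

import Mathlib

open MeasureTheory Filter Topology

noncomputable section

namespace Mosco

variable {E : Type*} [MeasurableSpace E]

/-- The inner product of two real-valued functions with respect to a measure,
`⟨φ, ψ⟩ = ∫ φ ψ dμ`. -/
def ip (μ : Measure E) (φ ψ : E → ℝ) : ℝ := ∫ x, φ x * ψ x ∂μ

/-- The framework of Section 2.1: mutually singular probability measures `ν n`, `n : ℕ`
(`ν 0` playing the role of the limit measure `ν`), such that `L²(E, ν 0)` is separable,
together with disjoint sets `En n` carrying `ν n`, and a linear subset `F = 𝓕 ⊆ 𝓓`
which is dense in `L²(E, ν 0)`. -/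
structure Frame (E : Type*) [MeasurableSpace E] where
  ν : ℕ → Measure E
  prob : ∀ n, IsProbabilityMeasure (ν n)
  singular : ∀ m n, m ≠ n → (ν m).MutuallySingular (ν n)
  separableL2 : TopologicalSpace.SeparableSpace (Lp ℝ 2 (ν 0))
  En : ℕ → Set E
  measEn : ∀ n, MeasurableSet (En n)
  disjEn : ∀ m n, m ≠ n → Disjoint (En m) (En n)
  nullEn : ∀ n, ν n (En n)ᶜ = 0
  F : Set (E → ℝ)
  F_measurable : ∀ φ ∈ F, Measurable φ
  F_memL2 : ∀ φ ∈ F, ∀ n, MemLp φ 2 (ν n)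
  F_tendsto : ∀ φ ∈ F, Tendsto (fun n => ip (ν n) φ φ) atTop (𝓝 (ip (ν 0) φ φ))
  F_linear : ∀ φ ∈ F, ∀ ψ ∈ F, ∀ a b : ℝ, (fun x => a * φ x + b * ψ x) ∈ F
  F_dense : ∀ f : E → ℝ, Measurable f → MemLp f 2 (ν 0) → ∀ ε : ℝ, 0 < ε →
    ∃ φ ∈ F, ip (ν 0) (fun x => f x - φ x) (fun x => f x - φ x) < ε

/-- The set `𝓓`: everywhere defined measurable functions lying in every `L²(E, ν n)`
whose `ν n`-norms converge to the `ν 0`-norm. -/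
def Frame.D (fr : Frame E) : Set (E → ℝ) :=
  {φ | Measurable φ ∧ (∀ n, MemLp φ 2 (fr.ν n)) ∧
    Tendsto (fun n => ip (fr.ν n) φ φ) atTop (𝓝 (ip (fr.ν 0) φ φ))}

/-- The set `𝓒`: elements of `𝓓` satisfying conditions (c1) and (c2). -/
def Frame.C (fr : Frame E) : Set (E → ℝ) :=
  {φ | φ ∈ fr.D ∧ (∀ n, 1 ≤ n → ∃ g ∈ fr.F, φ =ᵐ[fr.ν n] g) ∧
    ∀ ψ ∈ fr.F, Tendsto (fun n => ip (fr.ν n) φ ψ) atTop (𝓝 (ip (fr.ν 0) φ ψ))}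

/-- The set `𝓥` of multipliers mapping `𝓓` into `𝓓` and `𝓕` into `𝓕`. -/
def Frame.V (fr : Frame E) : Set (E → ℝ) :=
  {ψ | Measurable ψ ∧ (∀ n, MemLp ψ 2 (fr.ν n)) ∧
    (∀ σ ∈ fr.D, (fun x => σ x * ψ x) ∈ fr.D) ∧
    (∀ τ ∈ fr.F, (fun x => τ x * ψ x) ∈ fr.F)}

/-- `w`-convergence of a sequence `φs` (with `φs n` regarded as an element of
`L²(E, ν n)`) to `φ ∈ L²(E, ν 0)`. -/
def Frame.WConv (fr : Frame E) (φs : ℕ → E → ℝ) (φ : E → ℝ) : Prop :=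
  ∀ ψ ∈ fr.C, Tendsto (fun n => ip (fr.ν n) (φs n) ψ) atTop (𝓝 (ip (fr.ν 0) φ ψ))

/-- `s`-convergence: `w`-convergence together with convergence of the norms. -/
def Frame.SConv (fr : Frame E) (φs : ℕ → E → ℝ) (φ : E → ℝ) : Prop :=
  fr.WConv φs φ ∧
  Tendsto (fun n => ip (fr.ν n) (φs n) (φs n)) atTop (𝓝 (ip (fr.ν 0) φ φ))

open Classical

/-- The `L²(μ)`-class of a function (zero if the function is not square-integrable). -/
def toL2 (μ : Measure E) (φ : E → ℝ) : Lp ℝ 2 μ :=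
  if h : MemLp φ 2 μ then h.toLp φ else 0

/-- A strongly continuous semigroup of bounded linear operators on `L²(E, μ)`. -/
structure Semigroup2 {E : Type*} [MeasurableSpace E] (μ : Measure E) where
  T : ℝ → Lp ℝ 2 μ →L[ℝ] Lp ℝ 2 μ
  T_zero : T 0 = ContinuousLinearMap.id ℝ (Lp ℝ 2 μ)
  T_add : ∀ s t : ℝ, 0 ≤ s → 0 ≤ t → T (s + t) = (T s).comp (T t)
  strongCont : ∀ f : Lp ℝ 2 μ, Tendsto (fun t => T t f) (𝓝[≥] (0:ℝ)) (𝓝 f)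

namespace Semigroup2

variable {μ : Measure E}

/-- The semigroup is a contraction semigroup. -/
def IsContraction (sg : Semigroup2 μ) : Prop := ∀ t : ℝ, 0 ≤ t → ‖sg.T t‖ ≤ 1

/-- The adjoint (dual) semigroup `T'`. -/
def dual (sg : Semigroup2 μ) (t : ℝ) : Lp ℝ 2 μ →L[ℝ] Lp ℝ 2 μ :=
  ContinuousLinearMap.adjoint (sg.T t)

/-- Membership in the domain `D(A)` of the generator. -/
def memDom (sg : Semigroup2 μ) (f : Lp ℝ 2 μ) : Prop :=
  ∃ g : Lp ℝ 2 μ, Tendsto (fun t : ℝ => t⁻¹ • (sg.T t f - f)) (𝓝[>] (0:ℝ)) (𝓝 g)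

/-- The generator `A` (zero off its domain). -/
def gen (sg : Semigroup2 μ) (f : Lp ℝ 2 μ) : Lp ℝ 2 μ :=
  if h : sg.memDom f then Exists.choose h else 0

/-- Membership in the domain `D(A')` of the adjoint generator. -/
def memDom' (sg : Semigroup2 μ) (f : Lp ℝ 2 μ) : Prop :=
  ∃ g : Lp ℝ 2 μ, Tendsto (fun t : ℝ => t⁻¹ • (sg.dual t f - f)) (𝓝[>] (0:ℝ)) (𝓝 g)

/-- The adjoint generator `A'` (zero off its domain). -/
def gen' (sg : Semigroup2 μ) (f : Lp ℝ 2 μ) : Lp ℝ 2 μ :=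
  if h : sg.memDom' f then Exists.choose h else 0

/-- The resolvent `G_β = (β - A)⁻¹ = ∫_0^∞ e^{-βt} T_t dt`. -/
def res (sg : Semigroup2 μ) (β : ℝ) (f : Lp ℝ 2 μ) : Lp ℝ 2 μ :=
  ∫ t in Set.Ioi (0:ℝ), Real.exp (-β * t) • sg.T t f

/-- The adjoint resolvent `G'_β`. -/
def res' (sg : Semigroup2 μ) (β : ℝ) (f : Lp ℝ 2 μ) : Lp ℝ 2 μ :=
  ∫ t in Set.Ioi (0:ℝ), Real.exp (-β * t) • sg.dual t f

/-- `u ∈ D(A) = D(S)`, at the level of functions. -/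
def memD (sg : Semigroup2 μ) (u : E → ℝ) : Prop := sg.memDom (toL2 μ u)

/-- `u ∈ D(A')`, at the level of functions. -/
def memD' (sg : Semigroup2 μ) (u : E → ℝ) : Prop := sg.memDom' (toL2 μ u)

/-- `A u`, at the level of functions. -/
def Af (sg : Semigroup2 μ) (u : E → ℝ) : E → ℝ := sg.gen (toL2 μ u)

/-- `A' u`, at the level of functions. -/
def Af' (sg : Semigroup2 μ) (u : E → ℝ) : E → ℝ := sg.gen' (toL2 μ u)

/-- `G_β u`, at the level of functions. -/
def Res (sg : Semigroup2 μ) (β : ℝ) (u : E → ℝ) : E → ℝ := sg.res β (toL2 μ u)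

/-- `G'_β u`, at the level of functions. -/
def Res' (sg : Semigroup2 μ) (β : ℝ) (u : E → ℝ) : E → ℝ := sg.res' β (toL2 μ u)

/-- `T_t u`, at the level of functions. -/
def Tf (sg : Semigroup2 μ) (t : ℝ) (u : E → ℝ) : E → ℝ := sg.T t (toL2 μ u)

/-- `T'_t u`, at the level of functions. -/
def Tf' (sg : Semigroup2 μ) (t : ℝ) (u : E → ℝ) : E → ℝ := sg.dual t (toL2 μ u)

/-- The bilinear form `S(u, v) = ⟨-A u, v⟩` associated with the semigroup. -/
def S (sg : Semigroup2 μ) (u v : E → ℝ) : ℝ := ip μ (fun x => -(sg.Af u x)) v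

/-- `S_β(u, v) = β ⟨u, v⟩ + S(u, v)`. -/
def Sb (sg : Semigroup2 μ) (β : ℝ) (u v : E → ℝ) : ℝ := β * ip μ u v + sg.S u v

end Semigroup2

/-- Definition 2.4 (i) and (ii): the forms `S n` pre-converge to `S 0`.
Here `sg n` is the semigroup on `L²(E, ν n)` and `sg 0` the limiting one. -/
def PreConv (fr : Frame E) (sg : ∀ n, Semigroup2 (fr.ν n)) : Prop :=
  (∀ φ : E → ℝ, Measurable φ → MemLp φ 2 (fr.ν 0) →
    ∀ nk : ℕ → ℕ, StrictMono nk →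
    ∀ φk : ℕ → E → ℝ, (∀ k, φk k ∈ fr.C ∧ (sg (nk k)).memD (φk k)) →
    (∀ ψ ∈ fr.C, Tendsto (fun k => ip (fr.ν (nk k)) (φk k) ψ)
      atTop (𝓝 (ip (fr.ν 0) φ ψ))) →
    (∃ M : ℝ, ∀ k, ip (fr.ν (nk k)) ((sg (nk k)).Af (φk k)) ((sg (nk k)).Af (φk k)) ≤ M) →
    (sg 0).memD φ ∧
      (sg 0).S φ φ ≤ liminf (fun k => (sg (nk k)).S (φk k) (φk k)) atTop) ∧
  (∀ ψ : E → ℝ, Measurable ψ → MemLp ψ 2 (fr.ν 0) → (sg 0).memD ψ →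
    ∃ ψs : ℕ → E → ℝ, (∀ n, ψs n ∈ fr.C ∧ (sg n).memD (ψs n)) ∧
      fr.SConv ψs ψ ∧
      (∃ M : ℝ, ∀ n, ip (fr.ν n) ((sg n).Af (ψs n)) ((sg n).Af (ψs n)) ≤ M) ∧
      limsup (fun n => (sg n).S (ψs n) (ψs n)) atTop ≤ (sg 0).S ψ ψ)

/-- Condition (iii) of Definition 2.4. -/
def CondIII (fr : Frame E) (sg : ∀ n, Semigroup2 (fr.ν n)) : Prop :=
  ∀ β : ℝ, 0 < β →
  ∀ u : E → ℝ, Measurable u → MemLp u 2 (fr.ν 0) → (sg 0).memD u →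
  ∀ us : ℕ → E → ℝ,
    (∀ n, us n ∈ fr.C ∧ (sg n).memD (us n) ∧ ∃ c ∈ fr.C, (sg n).Af (us n) =ᵐ[fr.ν n] c) →
    (∃ w : E → ℝ, Measurable w ∧ MemLp w 2 (fr.ν 0) ∧ fr.WConv us w) →
    (∃ M : ℝ, ∀ n, ip (fr.ν n) ((sg n).Af (us n)) ((sg n).Af (us n)) ≤ M) →
    (∀ ψ ∈ fr.C, ∀ ψs : ℕ → E → ℝ, (∀ n, ψs n ∈ fr.C) → fr.SConv ψs ψ →
      Tendsto (fun n => (sg n).Sb β (us n) (ψs n)) atTop (𝓝 ((sg 0).Sb β u ψ))) →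
    ∀ ψ : E → ℝ, Measurable ψ → MemLp ψ 2 (fr.ν 0) → (sg 0).memD ψ →
    ∀ ψs : ℕ → E → ℝ, (∀ n, ψs n ∈ fr.C ∧ (sg n).memD (ψs n)) → fr.SConv ψs ψ →
      (∃ M : ℝ, ∀ n, ip (fr.ν n) ((sg n).Af (ψs n)) ((sg n).Af (ψs n)) ≤ M) →
      limsup (fun n => (sg n).S (ψs n) (ψs n)) atTop ≤ (sg 0).S ψ ψ →
      Tendsto (fun n => (sg n).Sb β (ψs n) (us n)) atTop (𝓝 ((sg 0).Sb β ψ u))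

/-- Condition (iv) of Lemma 2.6. -/
def CondIV (fr : Frame E) (sg : ∀ n, Semigroup2 (fr.ν n)) : Prop :=
  ∀ β : ℝ, 0 < β →
  ∀ u : E → ℝ, Measurable u → MemLp u 2 (fr.ν 0) → (sg 0).memD u →
  ∀ us : ℕ → E → ℝ,
    (∀ n, us n ∈ fr.C ∧ (sg n).memD (us n) ∧ ∃ c ∈ fr.C, (sg n).Af (us n) =ᵐ[fr.ν n] c) →
    (∃ w : E → ℝ, Measurable w ∧ MemLp w 2 (fr.ν 0) ∧ fr.WConv us w) →
    (∃ M : ℝ, ∀ n, ip (fr.ν n) ((sg n).Af (us n)) ((sg n).Af (us n)) ≤ M) →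
    fr.WConv (fun n x => β * us n x - (sg n).Af (us n) x)
      (fun x => β * u x - (sg 0).Af u x) →
    fr.WConv us u

/-- The forms converge: pre-convergence together with condition (iii). -/
def Conv (fr : Frame E) (sg : ∀ n, Semigroup2 (fr.ν n)) : Prop :=
  PreConv fr sg ∧ CondIII fr sg

/-- Condition (c3): resolvents and adjoint resolvents of elements of `𝓒`
coincide a.e. with elements of `𝓒`. -/
def CondC3 (fr : Frame E) (sg : ∀ n, Semigroup2 (fr.ν n)) : Prop :=
  ∀ g ∈ fr.C, ∀ β : ℝ, 0 < β →
    (∃ u ∈ fr.C, (sg 0).Res β g =ᵐ[fr.ν 0] u) ∧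
    (∀ n, 1 ≤ n → ∃ u ∈ fr.C, (sg n).Res β g =ᵐ[fr.ν n] u) ∧
    (∃ u ∈ fr.C, (sg 0).Res' β g =ᵐ[fr.ν 0] u) ∧
    (∀ n, 1 ≤ n → ∃ u ∈ fr.C, (sg n).Res' β g =ᵐ[fr.ν n] u)

/-- Condition (c4): `D(S) ⊆ 𝓒` and `A(D(S)) ⊆ 𝓒`, up to `ν 0`-a.e. equality. -/
def CondC4 (fr : Frame E) (sg : ∀ n, Semigroup2 (fr.ν n)) : Prop :=
  ∀ φ : E → ℝ, Measurable φ → MemLp φ 2 (fr.ν 0) → (sg 0).memD φ →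
    (∃ u ∈ fr.C, φ =ᵐ[fr.ν 0] u) ∧ (∃ u ∈ fr.C, (sg 0).Af φ =ᵐ[fr.ν 0] u)

/-- Condition (c5): semigroups and adjoint semigroups applied to elements of `𝓒`
coincide a.e. with elements of `𝓒`. -/
def CondC5 (fr : Frame E) (sg : ∀ n, Semigroup2 (fr.ν n)) : Prop :=
  ∀ g ∈ fr.C, ∀ t : ℝ, 0 ≤ t →
    (∃ u ∈ fr.C, (sg 0).Tf t g =ᵐ[fr.ν 0] u) ∧
    (∀ n, 1 ≤ n → ∃ u ∈ fr.C, (sg n).Tf t g =ᵐ[fr.ν n] u) ∧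
    (∃ u ∈ fr.C, (sg 0).Tf' t g =ᵐ[fr.ν 0] u) ∧
    (∀ n, 1 ≤ n → ∃ u ∈ fr.C, (sg n).Tf' t g =ᵐ[fr.ν n] u)

/-! ### Auxiliary lemmas -/

section IpLemmas

variable {μ : Measure E} {f g : E → ℝ}

lemma inner_eq_ip (F G : Lp ℝ 2 μ) : (inner ℝ F G : ℝ) = ip μ F G := by
  rw [MeasureTheory.L2.inner_def]
  simp [ip, RCLike.inner_apply, conj_trivial, mul_comm]

lemma toL2_coe (F : Lp ℝ 2 μ) : toL2 μ (⇑F) = F := by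
  rw [toL2, dif_pos (Lp.memLp F)]; exact MeasureTheory.Lp.toLp_coeFn F _

lemma ip_congr_ae {f' g' : E → ℝ} (hf : f =ᵐ[μ] f') (hg : g =ᵐ[μ] g') :
    ip μ f g = ip μ f' g' := by
  refine integral_congr_ae ?_
  filter_upwards [hf, hg] with x h1 h2; rw [h1, h2]

lemma ip_eq_inner (hf : MemLp f 2 μ) (hg : MemLp g 2 μ) :
    ip μ f g = (inner ℝ (toL2 μ f) (toL2 μ g) : ℝ) := by
  rw [inner_eq_ip, toL2, toL2, dif_pos hf, dif_pos hg]
  exact ip_congr_ae hf.coeFn_toLp.symm hg.coeFn_toLp.symm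

lemma ip_integrable (hf : MemLp f 2 μ) (hg : MemLp g 2 μ) :
    Integrable (fun x => f x * g x) μ := by
  have h := MeasureTheory.L2.integrable_inner (𝕜 := ℝ) (hf.toLp f) (hg.toLp g)
  simp only [RCLike.inner_apply, conj_trivial] at h
  refine h.congr ?_
  filter_upwards [hf.coeFn_toLp, hg.coeFn_toLp] with x h1 h2
  rw [h1, h2, mul_comm]

lemma ip_self_eq (hf : MemLp f 2 μ) : ip μ f f = ‖toL2 μ f‖ ^ 2 := by
  rw [ip_eq_inner hf hf, real_inner_self_eq_norm_sq]

lemma ip_self_nonneg (hf : MemLp f 2 μ) : 0 ≤ ip μ f f := by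
  rw [ip_self_eq hf]; positivity

lemma norm_toL2_eq (hf : MemLp f 2 μ) : ‖toL2 μ f‖ = Real.sqrt (ip μ f f) := by
  rw [ip_self_eq hf, Real.sqrt_sq (norm_nonneg _)]

lemma abs_ip_le (hf : MemLp f 2 μ) (hg : MemLp g 2 μ) :
    |ip μ f g| ≤ Real.sqrt (ip μ f f) * Real.sqrt (ip μ g g) := by
  rw [ip_eq_inner hf hg, ← norm_toL2_eq hf, ← norm_toL2_eq hg]
  exact abs_real_inner_le_norm _ _

lemma ip_comm (f g : E → ℝ) : ip μ f g = ip μ g f := by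
  unfold ip; simp_rw [mul_comm]

lemma ip_add_left {h : E → ℝ} (hf : MemLp f 2 μ) (hg : MemLp g 2 μ) (hh : MemLp h 2 μ) :
    ip μ (fun x => f x + g x) h = ip μ f h + ip μ g h := by
  unfold ip
  rw [← integral_add (ip_integrable hf hh) (ip_integrable hg hh)]
  congr 1; ext x; ring

lemma ip_smul_left (c : ℝ) : ip μ (fun x => c * f x) g = c * ip μ f g := by
  unfold ip; rw [← integral_const_mul]; congr 1; ext x; ring

lemma memℒp_smul (hf : MemLp f 2 μ) (c : ℝ) : MemLp (fun x => c * f x) 2 μ := by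
  exact hf.const_smul c

lemma memℒp_comb (hf : MemLp f 2 μ) (hg : MemLp g 2 μ) (c : ℝ) :
    MemLp (fun x => f x + c * g x) 2 μ := hf.add (memℒp_smul hg c)

lemma ip_comb_left {h : E → ℝ} (hf : MemLp f 2 μ) (hg : MemLp g 2 μ) (hh : MemLp h 2 μ)
    (c : ℝ) : ip μ (fun x => f x + c * g x) h = ip μ f h + c * ip μ g h := by
  rw [ip_add_left hf (memℒp_smul hg c) hh, ip_smul_left]

lemma ip_comb_right {h : E → ℝ} (hf : MemLp f 2 μ) (hg : MemLp g 2 μ) (hh : MemLp h 2 μ)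
    (c : ℝ) : ip μ h (fun x => f x + c * g x) = ip μ h f + c * ip μ h g := by
  rw [ip_comm, ip_comb_left hf hg hh, ip_comm f h, ip_comm g h]

lemma ip_sub_sub (hf : MemLp f 2 μ) (hg : MemLp g 2 μ) :
    ip μ (fun x => f x - g x) (fun x => f x - g x)
      = ip μ f f - 2 * ip μ f g + ip μ g g := by
  have h1 : (fun x => f x - g x) = fun x => f x + (-1 : ℝ) * g x := by ext x; ring
  rw [h1, ip_comb_left hf hg (memℒp_comb hf hg (-1)),
    ip_comb_right hf hg hf, ip_comb_right hf hg hg, ip_comm g f]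
  ring

lemma toL2_comb {u v : E → ℝ} (hu : MemLp u 2 μ) (hv : MemLp v 2 μ) (c : ℝ) :
    toL2 μ (fun x => u x + c * v x) = toL2 μ u + c • toL2 μ v := by
  have hcv : MemLp (fun x => c * v x) 2 μ := memℒp_smul hv c
  have hsum : MemLp (fun x => u x + c * v x) 2 μ := hu.add hcv
  rw [toL2, toL2, toL2, dif_pos hu, dif_pos hv, dif_pos hsum]
  have h1 : hsum.toLp _ = hu.toLp u + hcv.toLp _ := by
    rw [← MemLp.toLp_add hu hcv]
    exact MemLp.toLp_congr _ _ (by filter_upwards with x; rfl)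
  rw [h1]
  congr 1

end IpLemmas

section GenLemmas

variable {μ : Measure E} (sg : Semigroup2 μ)

lemma Semigroup2.gen_spec {f : Lp ℝ 2 μ} (h : sg.memDom f) :
    Tendsto (fun t : ℝ => t⁻¹ • (sg.T t f - f)) (𝓝[>] (0:ℝ)) (𝓝 (sg.gen f)) := by
  rw [Semigroup2.gen, dif_pos h]; exact h.choose_spec

lemma Semigroup2.gen_eq {f g : Lp ℝ 2 μ}
    (h : Tendsto (fun t : ℝ => t⁻¹ • (sg.T t f - f)) (𝓝[>] (0:ℝ)) (𝓝 g)) :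
    sg.gen f = g :=
  tendsto_nhds_unique (sg.gen_spec ⟨g, h⟩) h

lemma Semigroup2.quot_comb (f g : Lp ℝ 2 μ) (c : ℝ) (t : ℝ) :
    t⁻¹ • (sg.T t (f + c • g) - (f + c • g))
      = t⁻¹ • (sg.T t f - f) + c • (t⁻¹ • (sg.T t g - g)) := by
  rw [map_add, (sg.T t).map_smul]
  rw [smul_comm c t⁻¹, ← smul_add]
  congr 1
  rw [smul_sub]
  abel

lemma Semigroup2.memDom_comb {f g : Lp ℝ 2 μ} (hf : sg.memDom f) (hg : sg.memDom g)
    (c : ℝ) : sg.memDom (f + c • g) := by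
  refine ⟨sg.gen f + c • sg.gen g, ?_⟩
  exact ((sg.gen_spec hf).add ((sg.gen_spec hg).const_smul c)).congr
    fun t => (sg.quot_comb f g c t).symm

lemma Semigroup2.gen_comb {f g : Lp ℝ 2 μ} (hf : sg.memDom f) (hg : sg.memDom g)
    (c : ℝ) : sg.gen (f + c • g) = sg.gen f + c • sg.gen g := by
  apply sg.gen_eq
  exact ((sg.gen_spec hf).add ((sg.gen_spec hg).const_smul c)).congr
    fun t => (sg.quot_comb f g c t).symm

lemma Semigroup2.gen_inner_nonpos (hc : sg.IsContraction) {f : Lp ℝ 2 μ}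
    (hf : sg.memDom f) : (inner ℝ (sg.gen f) f : ℝ) ≤ 0 := by
  have h : Tendsto (fun t : ℝ => (inner ℝ (t⁻¹ • (sg.T t f - f)) f : ℝ)) (𝓝[>] (0:ℝ))
      (𝓝 (inner ℝ (sg.gen f) f)) := (sg.gen_spec hf).inner tendsto_const_nhds
  refine le_of_tendsto h ?_
  filter_upwards [self_mem_nhdsWithin] with t ht
  have ht0 : 0 < t := ht
  rw [real_inner_smul_left, inner_sub_left]
  have h1 : (inner ℝ (sg.T t f) f : ℝ) ≤ ‖f‖ * ‖f‖ := by
    refine le_trans (real_inner_le_norm _ _) ?_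
    gcongr
    calc ‖sg.T t f‖ ≤ ‖sg.T t‖ * ‖f‖ := (sg.T t).le_opNorm f
    _ ≤ 1 * ‖f‖ := by gcongr; exact hc t ht0.le
    _ = ‖f‖ := one_mul _
  have h2 : (inner ℝ f f : ℝ) = ‖f‖ * ‖f‖ := real_inner_self_eq_norm_mul_norm f
  have h3 : (0:ℝ) ≤ t⁻¹ := (inv_pos.mpr ht0).le
  nlinarith

end GenLemmas

section SLemmas

variable {μ : Measure E} (sg : Semigroup2 μ)

lemma Semigroup2.S_eq {u ψ : E → ℝ} (hψ : MemLp ψ 2 μ) :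
    sg.S u ψ = -(inner ℝ (sg.gen (toL2 μ u)) (toL2 μ ψ) : ℝ) := by
  unfold Semigroup2.S Semigroup2.Af
  set g := sg.gen (toL2 μ u) with hg
  have h1 : ip μ (fun x => -(g x)) ψ = -(ip μ (⇑g) ψ) := by
    unfold ip; rw [← integral_neg]; congr 1; ext x; ring
  rw [h1, ip_eq_inner (Lp.memLp g) hψ, toL2_coe]

lemma Semigroup2.ip_Af_eq (u : E → ℝ) :
    ip μ (sg.Af u) (sg.Af u) = ‖sg.gen (toL2 μ u)‖ ^ 2 := by
  unfold Semigroup2.Af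
  rw [ip_self_eq (Lp.memLp _), toL2_coe]

lemma Semigroup2.S_nonneg (hc : sg.IsContraction) {u : E → ℝ} (hu : MemLp u 2 μ)
    (hD : sg.memD u) : 0 ≤ sg.S u u := by
  rw [sg.S_eq hu]
  simp only [neg_nonneg]
  exact sg.gen_inner_nonpos hc hD

lemma Semigroup2.abs_S_le {u ψ : E → ℝ} (hψ : MemLp ψ 2 μ) :
    |sg.S u ψ| ≤ Real.sqrt (ip μ (sg.Af u) (sg.Af u)) * Real.sqrt (ip μ ψ ψ) := by
  rw [sg.S_eq hψ, abs_neg]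
  have h1 : Real.sqrt (ip μ (sg.Af u) (sg.Af u)) = ‖sg.gen (toL2 μ u)‖ := by
    rw [sg.ip_Af_eq, Real.sqrt_sq (norm_nonneg _)]
  rw [h1, ← norm_toL2_eq hψ]
  exact abs_real_inner_le_norm _ _

lemma Semigroup2.memD_comb {u v : E → ℝ} (hu : MemLp u 2 μ) (hv : MemLp v 2 μ)
    (hud : sg.memD u) (hvd : sg.memD v) (c : ℝ) :
    sg.memD (fun x => u x + c * v x) := by
  unfold Semigroup2.memD
  rw [toL2_comb hu hv]
  exact sg.memDom_comb hud hvd c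

lemma Semigroup2.S_comb_left {u v ψ : E → ℝ} (hu : MemLp u 2 μ) (hv : MemLp v 2 μ)
    (hud : sg.memD u) (hvd : sg.memD v) (hψ : MemLp ψ 2 μ) (c : ℝ) :
    sg.S (fun x => u x + c * v x) ψ = sg.S u ψ + c * sg.S v ψ := by
  rw [sg.S_eq hψ, sg.S_eq hψ, sg.S_eq hψ, toL2_comb hu hv,
    sg.gen_comb hud hvd, inner_add_left, real_inner_smul_left]
  ring

lemma Semigroup2.S_comb_right {u ψ χ : E → ℝ} (hψ : MemLp ψ 2 μ) (hχ : MemLp χ 2 μ)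
    (c : ℝ) : sg.S u (fun x => ψ x + c * χ x) = sg.S u ψ + c * sg.S u χ := by
  rw [sg.S_eq hψ, sg.S_eq hχ, sg.S_eq (memℒp_comb hψ hχ c), toL2_comb hψ hχ,
    inner_add_right, real_inner_smul_right]
  ring

lemma Semigroup2.S_comb_comb {u v : E → ℝ} (hu : MemLp u 2 μ) (hv : MemLp v 2 μ)
    (hud : sg.memD u) (hvd : sg.memD v) (c : ℝ) :
    sg.S (fun x => u x + c * v x) (fun x => u x + c * v x)
      = sg.S u u + c * (sg.S u v + sg.S v u) + c ^ 2 * sg.S v v := by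
  rw [sg.S_comb_left hu hv hud hvd (memℒp_comb hu hv c) c,
    sg.S_comb_right hu hv c, sg.S_comb_right hu hv c]
  ring

end SLemmas

section FrameLemmas

variable (fr : Frame E)

lemma Frame.C_measurable {φ : E → ℝ} (h : φ ∈ fr.C) : Measurable φ := h.1.1

lemma Frame.C_memℒp {φ : E → ℝ} (h : φ ∈ fr.C) : ∀ n, MemLp φ 2 (fr.ν n) := h.1.2.1

lemma Frame.C_norm_tendsto {φ : E → ℝ} (h : φ ∈ fr.C) :
    Tendsto (fun n => ip (fr.ν n) φ φ) atTop (𝓝 (ip (fr.ν 0) φ φ)) := h.1.2.2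

lemma Frame.C_c2 {φ : E → ℝ} (h : φ ∈ fr.C) :
    ∀ ψ ∈ fr.F, Tendsto (fun n => ip (fr.ν n) φ ψ) atTop (𝓝 (ip (fr.ν 0) φ ψ)) := h.2.2

lemma Frame.F_subset_C : fr.F ⊆ fr.C := by
  intro φ hφ
  have hD : φ ∈ fr.D := ⟨fr.F_measurable φ hφ, fr.F_memL2 φ hφ, fr.F_tendsto φ hφ⟩
  refine ⟨hD, fun n _ => ⟨φ, hφ, EventuallyEq.rfl⟩, ?_⟩
  intro ψ hψ
  have hsum : (fun x => 1 * φ x + 1 * ψ x) ∈ fr.F := fr.F_linear φ hφ ψ hψ 1 1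
  have hmφ := fr.F_memL2 φ hφ
  have hmψ := fr.F_memL2 ψ hψ
  have key : ∀ n, ip (fr.ν n) φ ψ =
      (ip (fr.ν n) (fun x => 1 * φ x + 1 * ψ x) (fun x => 1 * φ x + 1 * ψ x)
        - ip (fr.ν n) φ φ - ip (fr.ν n) ψ ψ) / 2 := by
    intro n
    have e1 : (fun x : E => 1 * φ x + 1 * ψ x) = (fun x => φ x + 1 * ψ x) := by
      ext x; ring
    rw [e1, ip_comb_left (hmφ n) (hmψ n) (memℒp_comb (hmφ n) (hmψ n) 1) 1,
      ip_comb_right (hmφ n) (hmψ n) (hmφ n) 1,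
      ip_comb_right (hmφ n) (hmψ n) (hmψ n) 1, ip_comm ψ φ]
    ring
  have h1 := (((fr.F_tendsto _ hsum).sub (fr.F_tendsto φ hφ)).sub
    (fr.F_tendsto ψ hψ)).div_const 2
  rw [← key 0] at h1
  exact h1.congr fun n => (key n).symm

/-- The generic approximation lemma used to pass weak-type limits through
varying measures. -/
lemma ip_tendsto_approx (ν : ℕ → Measure E) (Fm Gm : ℕ → E → ℝ)
    (hF : ∀ m, MemLp (Fm m) 2 (ν m)) (hG : ∀ m, MemLp (Gm m) 2 (ν m))
    (B C L : ℝ)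
    (hFB : ∀ᶠ m in atTop, ip (ν m) (Fm m) (Fm m) ≤ B ^ 2)
    (happ : ∀ ε : ℝ, 0 < ε → ∃ ψ : E → ℝ, (∀ m, MemLp ψ 2 (ν m)) ∧
      (∀ᶠ m in atTop,
        ip (ν m) (fun x => Gm m x - ψ x) (fun x => Gm m x - ψ x) ≤ ε ^ 2) ∧
      ∃ P : ℝ, |P - L| ≤ C * ε ∧ Tendsto (fun m => ip (ν m) (Fm m) ψ) atTop (𝓝 P)) :
    Tendsto (fun m => ip (ν m) (Fm m) (Gm m)) atTop (𝓝 L) := by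
  rw [Metric.tendsto_nhds]
  intro δ hδ
  have hden : (0:ℝ) < |B| + |C| + 1 := by positivity
  set ε := δ / (2 * (|B| + |C| + 1)) with hε
  have hεpos : 0 < ε := by positivity
  obtain ⟨ψ, hψm, hGψ, P, hPL, hTend⟩ := happ ε hεpos
  have h1 : ∀ᶠ m in atTop, dist (ip (ν m) (Fm m) ψ) P < ε :=
    Metric.tendsto_nhds.mp hTend ε hεpos
  filter_upwards [hFB, hGψ, h1] with m hBm hGm hPm
  rw [Real.dist_eq] at hPm ⊢
  have hsub : MemLp (fun x => Gm m x - ψ x) 2 (ν m) := (hG m).sub (hψm m)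
  have hsplit : ip (ν m) (Fm m) (Gm m)
      = ip (ν m) (Fm m) ψ + ip (ν m) (Fm m) (fun x => Gm m x - ψ x) := by
    unfold ip
    rw [← integral_add (ip_integrable (hF m) (hψm m)) (ip_integrable (hF m) hsub)]
    congr 1; ext x; ring
  have hcs : |ip (ν m) (Fm m) (fun x => Gm m x - ψ x)| ≤ |B| * ε := by
    refine le_trans (abs_ip_le (hF m) hsub) ?_
    have e1 : Real.sqrt (ip (ν m) (Fm m) (Fm m)) ≤ |B| := by
      calc Real.sqrt (ip (ν m) (Fm m) (Fm m)) ≤ Real.sqrt (B ^ 2) :=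
            Real.sqrt_le_sqrt hBm
      _ = |B| := Real.sqrt_sq_eq_abs B
    have e2 : Real.sqrt (ip (ν m) (fun x => Gm m x - ψ x) (fun x => Gm m x - ψ x))
        ≤ ε := by
      calc Real.sqrt (ip (ν m) (fun x => Gm m x - ψ x) (fun x => Gm m x - ψ x))
          ≤ Real.sqrt (ε ^ 2) := Real.sqrt_le_sqrt hGm
      _ = ε := by rw [Real.sqrt_sq hεpos.le]
    exact mul_le_mul e1 e2 (Real.sqrt_nonneg _) (abs_nonneg B)
  have habs : |ip (ν m) (Fm m) (Gm m) - L|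
      ≤ |B| * ε + |ip (ν m) (Fm m) ψ - P| + |P - L| := by
    rw [hsplit]
    have e : ip (ν m) (Fm m) ψ + ip (ν m) (Fm m) (fun x => Gm m x - ψ x) - L
        = ip (ν m) (Fm m) (fun x => Gm m x - ψ x) + (ip (ν m) (Fm m) ψ - P) + (P - L) := by
      ring
    rw [e]
    refine le_trans (abs_add_three _ _ _) ?_
    gcongr
  have hεval : (|B| + |C| + 1) * ε = δ / 2 := by
    rw [hε]
    field_simp
  linarith [habs, hPm, hPL, hεval, hδ, mul_le_mul_of_nonneg_right (le_abs_self C) hεpos.le]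

end FrameLemmas

section CLemmas

variable (fr : Frame E)

/-- For `φ, χ ∈ 𝓒`, the inner products `⟨φ, χ⟩_m` converge to `⟨φ, χ⟩`. -/
lemma Frame.C_ip_tendsto {φ χ : E → ℝ} (hφ : φ ∈ fr.C) (hχ : χ ∈ fr.C) :
    Tendsto (fun m => ip (fr.ν m) φ χ) atTop (𝓝 (ip (fr.ν 0) φ χ)) := by
  have hφm := fr.C_memℒp hφ
  have hχm := fr.C_memℒp hχ
  refine ip_tendsto_approx (fr.ν) (fun _ => φ) (fun _ => χ) hφm hχm
    (Real.sqrt (ip (fr.ν 0) φ φ + 1)) (Real.sqrt (ip (fr.ν 0) φ φ)) _ ?_ ?_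
  · have h0 : (0:ℝ) ≤ ip (fr.ν 0) φ φ := ip_self_nonneg (hφm 0)
    have := (fr.C_norm_tendsto hφ).eventually_lt_const
      (show ip (fr.ν 0) φ φ < ip (fr.ν 0) φ φ + 1 by linarith)
    filter_upwards [this] with m hm
    rw [Real.sq_sqrt (by linarith)]
    exact hm.le
  · intro ε hε
    obtain ⟨ψ, hψF, hψclose⟩ := fr.F_dense χ (fr.C_measurable hχ) (hχm 0)
      (ε ^ 2 / 2) (by positivity)
    have hψm := fr.F_memL2 ψ hψF
    refine ⟨ψ, hψm, ?_, ip (fr.ν 0) φ ψ, ?_, fr.C_c2 hφ ψ hψF⟩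
    · -- eventually ip_m (χ - ψ) (χ - ψ) ≤ ε^2
      have hkey : ∀ m, ip (fr.ν m) (fun x => χ x - ψ x) (fun x => χ x - ψ x)
          = ip (fr.ν m) χ χ - 2 * ip (fr.ν m) χ ψ + ip (fr.ν m) ψ ψ :=
        fun m => ip_sub_sub (hχm m) (hψm m)
      have htend : Tendsto
          (fun m => ip (fr.ν m) (fun x => χ x - ψ x) (fun x => χ x - ψ x)) atTop
          (𝓝 (ip (fr.ν 0) (fun x => χ x - ψ x) (fun x => χ x - ψ x))) := by
        rw [hkey 0]
        refine Tendsto.congr (fun m => (hkey m).symm) ?_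
        exact (((fr.C_norm_tendsto hχ).sub ((fr.C_c2 hχ ψ hψF).const_mul 2)).add
          (fr.F_tendsto ψ hψF))
      have := htend.eventually_lt_const
        (show ip (fr.ν 0) (fun x => χ x - ψ x) (fun x => χ x - ψ x) < ε ^ 2 by
          calc ip (fr.ν 0) (fun x => χ x - ψ x) (fun x => χ x - ψ x) < ε ^ 2 / 2 :=
                hψclose
          _ < ε ^ 2 := by nlinarith [pow_pos hε 2] )
      exact this.mono fun m hm => hm.le
    · -- |ip₀ φ ψ - ip₀ φ χ| ≤ √(ip₀ φ φ) * ε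
      have h1 : ip (fr.ν 0) φ ψ - ip (fr.ν 0) φ χ
          = - ip (fr.ν 0) φ (fun x => χ x - ψ x) := by
        unfold ip
        rw [← integral_neg, ← integral_sub (ip_integrable (hφm 0) (hψm 0))
          (ip_integrable (hφm 0) (hχm 0))]
        congr 1; ext x; ring
      rw [h1, abs_neg]
      refine le_trans (abs_ip_le (hφm 0) ((hχm 0).sub (hψm 0))) ?_
      refine mul_le_mul_of_nonneg_left ?_ (Real.sqrt_nonneg _)
      calc Real.sqrt (ip (fr.ν 0) (fun x => χ x - ψ x) (fun x => χ x - ψ x))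
          ≤ Real.sqrt (ε ^ 2) := Real.sqrt_le_sqrt (by nlinarith [hψclose, pow_pos hε 2])
      _ = ε := Real.sqrt_sq hε.le

/-- `𝓒` is stable under the linear combinations `φ + c χ`. -/
lemma Frame.C_comb {φ χ : E → ℝ} (hφ : φ ∈ fr.C) (hχ : χ ∈ fr.C) (c : ℝ) :
    (fun x => φ x + c * χ x) ∈ fr.C := by
  have hφm := fr.C_memℒp hφ
  have hχm := fr.C_memℒp hχ
  have hmeas : Measurable (fun x => φ x + c * χ x) :=
    (fr.C_measurable hφ).add ((fr.C_measurable hχ).const_mul c)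
  have hml : ∀ n, MemLp (fun x => φ x + c * χ x) 2 (fr.ν n) :=
    fun n => memℒp_comb (hφm n) (hχm n) c
  have hkey : ∀ m, ip (fr.ν m) (fun x => φ x + c * χ x) (fun x => φ x + c * χ x)
      = ip (fr.ν m) φ φ + c * (2 * ip (fr.ν m) φ χ) + c ^ 2 * ip (fr.ν m) χ χ := by
    intro m
    rw [ip_comb_left (hφm m) (hχm m) (hml m) c, ip_comb_right (hφm m) (hχm m) (hφm m) c,
      ip_comb_right (hφm m) (hχm m) (hχm m) c, ip_comm χ φ]
    ring
  refine ⟨⟨hmeas, hml, ?_⟩, ?_, ?_⟩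
  · rw [hkey 0]
    refine Tendsto.congr (fun m => (hkey m).symm) ?_
    exact ((fr.C_norm_tendsto hφ).add
      (((fr.C_ip_tendsto hφ hχ).const_mul 2).const_mul c)).add
      ((fr.C_norm_tendsto hχ).const_mul (c ^ 2))
  · intro n hn
    obtain ⟨g1, hg1, he1⟩ := hφ.2.1 n hn
    obtain ⟨g2, hg2, he2⟩ := hχ.2.1 n hn
    refine ⟨fun x => 1 * g1 x + c * g2 x, fr.F_linear g1 hg1 g2 hg2 1 c, ?_⟩
    filter_upwards [he1, he2] with x h1 h2
    rw [h1, h2]; ring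
  · intro ψ hψ
    have hψm := fr.F_memL2 ψ hψ
    have hkey2 : ∀ m, ip (fr.ν m) (fun x => φ x + c * χ x) ψ
        = ip (fr.ν m) φ ψ + c * ip (fr.ν m) χ ψ :=
      fun m => ip_comb_left (hφm m) (hχm m) (hψm m) c
    rw [hkey2 0]
    refine Tendsto.congr (fun m => (hkey2 m).symm) ?_
    exact (fr.C_c2 hφ ψ hψ).add ((fr.C_c2 hχ ψ hψ).const_mul c)

end CLemmas

section BoundLemmas

/-- A real sequence that is eventually bounded in absolute value is globally bounded. -/
lemma global_abs_bound {u : ℕ → ℝ} {M : ℝ} (h : ∀ᶠ n in atTop, |u n| ≤ M) :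
    ∃ K : ℝ, 0 < K ∧ ∀ n, |u n| ≤ K := by
  have hb : IsBoundedUnder (· ≤ ·) atTop (fun n => |u n|) := ⟨M, eventually_map.mpr h⟩
  obtain ⟨K, hK⟩ := hb.bddAbove_range
  refine ⟨max K 1, lt_of_lt_of_le one_pos (le_max_right _ _), fun n => ?_⟩
  exact le_trans (hK (Set.mem_range_self n)) (le_max_left _ _)

end BoundLemmas

section SeqLemmas

/-- Any `ℕ`-valued sequence tending to infinity has a subsequence along which it is
strictly monotone. -/
lemma exists_strictMono_subseq {u : ℕ → ℕ} (hu : Tendsto u atTop atTop) :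
    ∃ φ : ℕ → ℕ, StrictMono φ ∧ StrictMono (u ∘ φ) := by
  have hh : ∀ N : ℕ, ∃ a : ℕ, ∀ b ≥ a, N < u b := fun N =>
    eventually_atTop.mp (hu.eventually_gt_atTop N)
  choose K hK using hh
  let φ : ℕ → ℕ := fun n => Nat.rec (K 0) (fun _ p => max (p + 1) (K (u p))) n
  have hstep : ∀ n, φ (n + 1) = max (φ n + 1) (K (u (φ n))) := fun n => rfl
  have hmono : StrictMono φ := by
    apply strictMono_nat_of_lt_succ
    intro n
    rw [hstep n]
    exact lt_of_lt_of_le (Nat.lt_succ_self _) (le_max_left _ _)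
  refine ⟨φ, hmono, strictMono_nat_of_lt_succ fun n => ?_⟩
  have h1 : φ (n + 1) ≥ K (u (φ n)) := by rw [hstep n]; exact le_max_right _ _
  exact hK (u (φ n)) (φ (n + 1)) h1

variable (fr : Frame E)

/-- Cross convergence: if `ws` `w`-converges to `w` with eventually bounded norms and
`vs` `s`-converges to `v`, then `⟨wₙ, vₙ⟩ₙ → ⟨w, v⟩`. -/
lemma Frame.cross_ip_tendsto {ws vs : ℕ → E → ℝ} {w v : E → ℝ}
    (hwsC : ∀ n, ws n ∈ fr.C) (hvsC : ∀ n, vs n ∈ fr.C)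
    (hw2 : MemLp w 2 (fr.ν 0)) (hvm : Measurable v) (hv2 : MemLp v 2 (fr.ν 0))
    (hwconv : fr.WConv ws w) (hvconv : fr.SConv vs v)
    {Bw : ℝ} (hBw : ∀ᶠ n in atTop, ip (fr.ν n) (ws n) (ws n) ≤ Bw ^ 2) :
    Tendsto (fun n => ip (fr.ν n) (ws n) (vs n)) atTop (𝓝 (ip (fr.ν 0) w v)) := by
  have hwsm : ∀ n, MemLp (ws n) 2 (fr.ν n) := fun n => fr.C_memℒp (hwsC n) n
  have hvsm : ∀ n, MemLp (vs n) 2 (fr.ν n) := fun n => fr.C_memℒp (hvsC n) n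
  refine ip_tendsto_approx (fr.ν) ws vs hwsm hvsm Bw (Real.sqrt (ip (fr.ν 0) w w)) _
    hBw ?_
  intro ε hε
  obtain ⟨ψ, hψF, hψclose⟩ := fr.F_dense v hvm hv2 (ε ^ 2 / 2) (by positivity)
  have hψm := fr.F_memL2 ψ hψF
  have hψC := fr.F_subset_C hψF
  refine ⟨ψ, hψm, ?_, ip (fr.ν 0) w ψ, ?_, hwconv ψ hψC⟩
  · have hkey : ∀ n, ip (fr.ν n) (fun x => vs n x - ψ x) (fun x => vs n x - ψ x)
        = ip (fr.ν n) (vs n) (vs n) - 2 * ip (fr.ν n) (vs n) ψ + ip (fr.ν n) ψ ψ :=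
      fun n => ip_sub_sub (hvsm n) (hψm n)
    have htend : Tendsto
        (fun n => ip (fr.ν n) (fun x => vs n x - ψ x) (fun x => vs n x - ψ x)) atTop
        (𝓝 (ip (fr.ν 0) (fun x => v x - ψ x) (fun x => v x - ψ x))) := by
      rw [ip_sub_sub hv2 (hψm 0)]
      refine Tendsto.congr (fun n => (hkey n).symm) ?_
      exact (hvconv.2.sub ((hvconv.1 ψ hψC).const_mul 2)).add (fr.F_tendsto ψ hψF)
    have := htend.eventually_lt_const
      (show ip (fr.ν 0) (fun x => v x - ψ x) (fun x => v x - ψ x) < ε ^ 2 by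
        nlinarith [hψclose, pow_pos hε 2])
    exact this.mono fun n hn => hn.le
  · have h1 : ip (fr.ν 0) w ψ - ip (fr.ν 0) w v
        = - ip (fr.ν 0) w (fun x => v x - ψ x) := by
      unfold ip
      rw [← integral_neg, ← integral_sub (ip_integrable hw2 (hψm 0))
        (ip_integrable hw2 hv2)]
      congr 1; ext x; ring
    rw [h1, abs_neg]
    refine le_trans (abs_ip_le hw2 (hv2.sub (hψm 0))) ?_
    refine mul_le_mul_of_nonneg_left ?_ (Real.sqrt_nonneg _)
    calc Real.sqrt (ip (fr.ν 0) (fun x => v x - ψ x) (fun x => v x - ψ x))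
        ≤ Real.sqrt (ε ^ 2) := Real.sqrt_le_sqrt (by nlinarith [hψclose, pow_pos hε 2])
    _ = ε := Real.sqrt_sq hε.le

end SeqLemmas

/-- Lemma 2.5 (b): under the hypotheses of Lemma 2.5 (a), if moreover `β > 0` and
`limsup_n S_{n,β}(wₙ, wₙ) < ∞`, then `w ∈ D(S)` and
`S_{n,β}(vₙ, wₙ) + S_{n,β}(wₙ, vₙ) → S_β(v, w) + S_β(w, v)`. -/
theorem lemma25b (fr : Frame E) (sg : ∀ n, Semigroup2 (fr.ν n))
    (hcontr : ∀ n, (sg n).IsContraction)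
    (hpre : PreConv fr sg)
    (w : E → ℝ) (hwm : Measurable w) (hw2 : MemLp w 2 (fr.ν 0))
    (ws : ℕ → E → ℝ) (hws : ∀ n, ws n ∈ fr.C ∧ (sg n).memD (ws n))
    (hwconv : fr.WConv ws w)
    (hwA : ∃ M : ℝ, ∀ n, ip (fr.ν n) ((sg n).Af (ws n)) ((sg n).Af (ws n)) ≤ M)
    (v : E → ℝ) (hvm : Measurable v) (hv2 : MemLp v 2 (fr.ν 0)) (hvD : (sg 0).memD v)
    (vs : ℕ → E → ℝ) (hvs : ∀ n, vs n ∈ fr.C ∧ (sg n).memD (vs n))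
    (hvconv : fr.SConv vs v)
    (hvA : ∃ M : ℝ, ∀ n, ip (fr.ν n) ((sg n).Af (vs n)) ((sg n).Af (vs n)) ≤ M)
    (hvS : limsup (fun n => (sg n).S (vs n) (vs n)) atTop ≤ (sg 0).S v v)
    (β : ℝ) (hβ : 0 < β)
    (hbd : IsBoundedUnder (· ≤ ·) atTop (fun n => (sg n).Sb β (ws n) (ws n))) :
    (sg 0).memD w ∧
    Tendsto (fun n => (sg n).Sb β (vs n) (ws n) + (sg n).Sb β (ws n) (vs n)) atTop
      (𝓝 ((sg 0).Sb β v w + (sg 0).Sb β w v)) := by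
  obtain ⟨hpre1, hpre2⟩ := hpre
  have hwsC : ∀ n, ws n ∈ fr.C := fun n => (hws n).1
  have hwsD : ∀ n, (sg n).memD (ws n) := fun n => (hws n).2
  have hvsC : ∀ n, vs n ∈ fr.C := fun n => (hvs n).1
  have hvsD : ∀ n, (sg n).memD (vs n) := fun n => (hvs n).2
  have hwsm : ∀ n, MemLp (ws n) 2 (fr.ν n) := fun n => fr.C_memℒp (hwsC n) n
  have hvsm : ∀ n, MemLp (vs n) 2 (fr.ν n) := fun n => fr.C_memℒp (hvsC n) n
  -- Step 1: `w ∈ D(S)`.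
  obtain ⟨hwD, -⟩ := hpre1 w hwm hw2 id strictMono_id ws hws hwconv hwA
  refine ⟨hwD, ?_⟩
  -- Bounds.
  obtain ⟨Mw, hMw⟩ := hwA
  obtain ⟨Mv, hMv⟩ := hvA
  have hSw_nonneg : ∀ n, 0 ≤ (sg n).S (ws n) (ws n) :=
    fun n => (sg n).S_nonneg (hcontr n) (hwsm n) (hwsD n)
  have hSv_nonneg : ∀ n, 0 ≤ (sg n).S (vs n) (vs n) :=
    fun n => (sg n).S_nonneg (hcontr n) (hvsm n) (hvsD n)
  obtain ⟨MB, hMB0⟩ := hbd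
  rw [eventually_map] at hMB0
  have hipw_ev : ∀ᶠ n in atTop, ip (fr.ν n) (ws n) (ws n) ≤ MB / β := by
    filter_upwards [hMB0] with n hn
    have h := hSw_nonneg n
    unfold Semigroup2.Sb at hn
    rw [le_div_iff₀ hβ]
    nlinarith
  have hBw2nn : (0:ℝ) ≤ max (MB / β) 0 := le_max_right _ _
  have hipw_ev' : ∀ᶠ n in atTop,
      ip (fr.ν n) (ws n) (ws n) ≤ (Real.sqrt (max (MB / β) 0)) ^ 2 := by
    rw [Real.sq_sqrt hBw2nn]
    filter_upwards [hipw_ev] with n hn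
    exact le_trans hn (le_max_left _ _)
  have hcross : Tendsto (fun n => ip (fr.ν n) (ws n) (vs n)) atTop
      (𝓝 (ip (fr.ν 0) w v)) :=
    fr.cross_ip_tendsto hwsC hvsC hw2 hvm hv2 hwconv hvconv hipw_ev'
  -- Bounds on the `A`-norms, in square-root form.
  have hMw' : ∀ n, Real.sqrt (ip (fr.ν n) ((sg n).Af (ws n)) ((sg n).Af (ws n)))
      ≤ Real.sqrt (max Mw 0) :=
    fun n => Real.sqrt_le_sqrt (le_trans (hMw n) (le_max_left _ _))
  have hMv' : ∀ n, Real.sqrt (ip (fr.ν n) ((sg n).Af (vs n)) ((sg n).Af (vs n)))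
      ≤ Real.sqrt (max Mv 0) :=
    fun n => Real.sqrt_le_sqrt (le_trans (hMv n) (le_max_left _ _))
  have hvsnorm_ev : ∀ᶠ n in atTop,
      ip (fr.ν n) (vs n) (vs n) ≤ ip (fr.ν 0) v v + 1 :=
    hvconv.2.eventually_le_const (lt_add_one _)
  -- `S_n(v_n, v_n) → S(v, v)`.
  have hSvb : ∀ᶠ n in atTop, |(sg n).S (vs n) (vs n)|
      ≤ Real.sqrt (max Mv 0) * Real.sqrt (ip (fr.ν 0) v v + 1) := by
    filter_upwards [hvsnorm_ev] with n hn
    refine le_trans ((sg n).abs_S_le (hvsm n)) ?_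
    exact mul_le_mul (hMv' n) (Real.sqrt_le_sqrt hn) (Real.sqrt_nonneg _)
      (Real.sqrt_nonneg _)
  have hSvliminf := (hpre1 v hvm hv2 id strictMono_id vs hvs hvconv.1 ⟨Mv, hMv⟩).2
  have hSvtend : Tendsto (fun n => (sg n).S (vs n) (vs n)) atTop
      (𝓝 ((sg 0).S v v)) := by
    refine tendsto_of_le_liminf_of_limsup_le hSvliminf hvS ?_ ?_
    · exact ⟨Real.sqrt (max Mv 0) * Real.sqrt (ip (fr.ν 0) v v + 1),
        eventually_map.mpr (hSvb.mono fun n hn => (abs_le.mp hn).2)⟩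
    · exact ⟨0, eventually_map.mpr (Eventually.of_forall hSv_nonneg)⟩
  -- The symmetrized cross form `d` and its limit `dlim`.
  have hd_ev : ∀ᶠ n in atTop, |(sg n).S (vs n) (ws n) + (sg n).S (ws n) (vs n)|
      ≤ Real.sqrt (max Mv 0) * Real.sqrt (max (MB / β) 0)
        + Real.sqrt (max Mw 0) * Real.sqrt (ip (fr.ν 0) v v + 1) := by
    filter_upwards [hipw_ev', hvsnorm_ev] with n h1 h2
    have e1 : |(sg n).S (vs n) (ws n)|
        ≤ Real.sqrt (max Mv 0) * Real.sqrt (max (MB / β) 0) := by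
      refine le_trans ((sg n).abs_S_le (hwsm n)) ?_
      refine mul_le_mul (hMv' n) ?_ (Real.sqrt_nonneg _) (Real.sqrt_nonneg _)
      calc Real.sqrt (ip (fr.ν n) (ws n) (ws n))
          ≤ Real.sqrt ((Real.sqrt (max (MB / β) 0)) ^ 2) := Real.sqrt_le_sqrt h1
      _ = Real.sqrt (max (MB / β) 0) := by
          rw [Real.sqrt_sq (Real.sqrt_nonneg _)]
    have e2 : |(sg n).S (ws n) (vs n)|
        ≤ Real.sqrt (max Mw 0) * Real.sqrt (ip (fr.ν 0) v v + 1) := by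
      refine le_trans ((sg n).abs_S_le (hvsm n)) ?_
      exact mul_le_mul (hMw' n) (Real.sqrt_le_sqrt h2) (Real.sqrt_nonneg _)
        (Real.sqrt_nonneg _)
    calc |(sg n).S (vs n) (ws n) + (sg n).S (ws n) (vs n)|
        ≤ |(sg n).S (vs n) (ws n)| + |(sg n).S (ws n) (vs n)| := abs_add_le _ _
    _ ≤ _ := add_le_add e1 e2
  obtain ⟨Kd, hKd0, hKd⟩ := global_abs_bound hd_ev
  have ha_ev : ∀ᶠ n in atTop, |(sg n).S (ws n) (ws n)|
      ≤ Real.sqrt (max Mw 0) * Real.sqrt (max (MB / β) 0) := by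
    filter_upwards [hipw_ev'] with n h1
    refine le_trans ((sg n).abs_S_le (hwsm n)) ?_
    refine mul_le_mul (hMw' n) ?_ (Real.sqrt_nonneg _) (Real.sqrt_nonneg _)
    calc Real.sqrt (ip (fr.ν n) (ws n) (ws n))
        ≤ Real.sqrt ((Real.sqrt (max (MB / β) 0)) ^ 2) := Real.sqrt_le_sqrt h1
    _ = Real.sqrt (max (MB / β) 0) := by rw [Real.sqrt_sq (Real.sqrt_nonneg _)]
  obtain ⟨Ka, hKa0, hKa⟩ := global_abs_bound ha_ev
  -- Convergence of `d` via the subsequence principle.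
  have hdtend : Tendsto (fun n => (sg n).S (vs n) (ws n) + (sg n).S (ws n) (vs n))
      atTop (𝓝 ((sg 0).S v w + (sg 0).S w v)) := by
    refine tendsto_of_subseq_tendsto fun ns hns => ?_
    obtain ⟨φ0, hφ0, hφ0'⟩ := exists_strictMono_subseq hns
    obtain ⟨L, -, ms1, hms1, hLtend⟩ := tendsto_subseq_of_bounded
      (Metric.isBounded_Icc (-Kd) Kd)
      (x := fun k => (sg (ns (φ0 k))).S (vs (ns (φ0 k))) (ws (ns (φ0 k)))
        + (sg (ns (φ0 k))).S (ws (ns (φ0 k))) (vs (ns (φ0 k))))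
      (fun k => Set.mem_Icc.mpr (abs_le.mp (hKd (ns (φ0 k)))))
    obtain ⟨α, -, ms2, hms2, hαtend⟩ := tendsto_subseq_of_bounded
      (Metric.isBounded_Icc (-Ka) Ka)
      (x := fun k => (sg (ns (φ0 (ms1 k)))).S (ws (ns (φ0 (ms1 k)))) (ws (ns (φ0 (ms1 k)))))
      (fun k => Set.mem_Icc.mpr (abs_le.mp (hKa (ns (φ0 (ms1 k))))))
    have hnk : StrictMono (fun k => ns (φ0 (ms1 (ms2 k)))) :=
      hφ0'.comp (hms1.comp hms2)
    set nk : ℕ → ℕ := fun k => ns (φ0 (ms1 (ms2 k))) with hnkdef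
    have hdk : Tendsto (fun k => (sg (nk k)).S (vs (nk k)) (ws (nk k))
        + (sg (nk k)).S (ws (nk k)) (vs (nk k))) atTop (𝓝 L) :=
      hLtend.comp hms2.tendsto_atTop
    have hak : Tendsto (fun k => (sg (nk k)).S (ws (nk k)) (ws (nk k))) atTop (𝓝 α) :=
      hαtend
    -- the quadratic trick: for all `t`, `S(w,w) + t·dlim ≤ α + t·L`
    have hkey : ∀ t : ℝ, (sg 0).S w w + t * ((sg 0).S v w + (sg 0).S w v)
        ≤ α + t * L := by
      intro t
      have hφkC : ∀ k, (fun x => ws (nk k) x + t * vs (nk k) x) ∈ fr.C ∧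
          (sg (nk k)).memD (fun x => ws (nk k) x + t * vs (nk k) x) := fun k =>
        ⟨fr.C_comb (hwsC (nk k)) (hvsC (nk k)) t,
          (sg (nk k)).memD_comb (hwsm (nk k)) (hvsm (nk k)) (hwsD (nk k)) (hvsD (nk k)) t⟩
      have hwk : ∀ ψ ∈ fr.C, Tendsto
          (fun k => ip (fr.ν (nk k)) (fun x => ws (nk k) x + t * vs (nk k) x) ψ) atTop
          (𝓝 (ip (fr.ν 0) (fun x => w x + t * v x) ψ)) := by
        intro ψ hψ
        have hψm := fr.C_memℒp hψ
        have hkeq : ∀ k, ip (fr.ν (nk k)) (fun x => ws (nk k) x + t * vs (nk k) x) ψ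
            = ip (fr.ν (nk k)) (ws (nk k)) ψ + t * ip (fr.ν (nk k)) (vs (nk k)) ψ :=
          fun k => ip_comb_left (hwsm (nk k)) (hvsm (nk k)) (hψm (nk k)) t
        rw [ip_comb_left hw2 hv2 (hψm 0) t]
        refine Tendsto.congr (fun k => (hkeq k).symm) ?_
        exact ((hwconv ψ hψ).comp hnk.tendsto_atTop).add
          (((hvconv.1 ψ hψ).comp hnk.tendsto_atTop).const_mul t)
      have hbound : ∃ M : ℝ, ∀ k, ip (fr.ν (nk k))
          ((sg (nk k)).Af (fun x => ws (nk k) x + t * vs (nk k) x))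
          ((sg (nk k)).Af (fun x => ws (nk k) x + t * vs (nk k) x)) ≤ M := by
        refine ⟨2 * max Mw 0 + 2 * t ^ 2 * max Mv 0, fun k => ?_⟩
        rw [(sg (nk k)).ip_Af_eq, toL2_comb (hwsm (nk k)) (hvsm (nk k)),
          (sg (nk k)).gen_comb (hwsD (nk k)) (hvsD (nk k))]
        set A := (sg (nk k)).gen (toL2 (fr.ν (nk k)) (ws (nk k)))
        set B := (sg (nk k)).gen (toL2 (fr.ν (nk k)) (vs (nk k)))
        have hA2 : ‖A‖ ^ 2 ≤ max Mw 0 := by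
          rw [← (sg (nk k)).ip_Af_eq]
          exact le_trans (hMw (nk k)) (le_max_left _ _)
        have hB2 : ‖B‖ ^ 2 ≤ max Mv 0 := by
          rw [← (sg (nk k)).ip_Af_eq]
          exact le_trans (hMv (nk k)) (le_max_left _ _)
        have h1 : ‖A + t • B‖ ≤ ‖A‖ + |t| * ‖B‖ := by
          refine le_trans (norm_add_le _ _) ?_
          rw [norm_smul, Real.norm_eq_abs]
        have h2 : ‖A + t • B‖ ^ 2 ≤ (‖A‖ + |t| * ‖B‖) ^ 2 :=
          pow_le_pow_left₀ (norm_nonneg _) h1 2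
        have h3 : (‖A‖ + |t| * ‖B‖) ^ 2 ≤ 2 * ‖A‖ ^ 2 + 2 * t ^ 2 * ‖B‖ ^ 2 := by
          nlinarith [sq_nonneg (‖A‖ - |t| * ‖B‖), sq_abs t]
        nlinarith [sq_abs t, sq_nonneg t]
      obtain ⟨-, hSineq⟩ := hpre1 (fun x => w x + t * v x)
        (hwm.add (hvm.const_mul t)) (memℒp_comb hw2 hv2 t) nk hnk
        (fun k x => ws (nk k) x + t * vs (nk k) x) hφkC hwk hbound
      have hexp : ∀ k, (sg (nk k)).S (fun x => ws (nk k) x + t * vs (nk k) x)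
          (fun x => ws (nk k) x + t * vs (nk k) x)
          = (sg (nk k)).S (ws (nk k)) (ws (nk k))
            + t * ((sg (nk k)).S (ws (nk k)) (vs (nk k))
              + (sg (nk k)).S (vs (nk k)) (ws (nk k)))
            + t ^ 2 * (sg (nk k)).S (vs (nk k)) (vs (nk k)) := fun k =>
        (sg (nk k)).S_comb_comb (hwsm (nk k)) (hvsm (nk k)) (hwsD (nk k)) (hvsD (nk k)) t
      have hrhs : Tendsto (fun k => (sg (nk k)).S
          (fun x => ws (nk k) x + t * vs (nk k) x)
          (fun x => ws (nk k) x + t * vs (nk k) x)) atTop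
          (𝓝 (α + t * L + t ^ 2 * (sg 0).S v v)) := by
        refine Tendsto.congr (fun k => (hexp k).symm) ?_
        have hdk' : Tendsto (fun k => (sg (nk k)).S (ws (nk k)) (vs (nk k))
            + (sg (nk k)).S (vs (nk k)) (ws (nk k))) atTop (𝓝 L) := by
          refine Tendsto.congr (fun k => ?_) hdk
          ring
        exact (hak.add (hdk'.const_mul t)).add
          ((hSvtend.comp hnk.tendsto_atTop).const_mul (t ^ 2))
      rw [hrhs.liminf_eq] at hSineq
      have hlhs : (sg 0).S (fun x => w x + t * v x) (fun x => w x + t * v x)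
          = (sg 0).S w w + t * ((sg 0).S w v + (sg 0).S v w)
            + t ^ 2 * (sg 0).S v v :=
        (sg 0).S_comb_comb hw2 hv2 hwD hvD t
      rw [hlhs] at hSineq
      linarith [hSineq]
    -- conclude `L = dlim`.
    have hLd : L = (sg 0).S v w + (sg 0).S w v := by
      by_contra hne
      have hall : ∀ t : ℝ, t * (((sg 0).S v w + (sg 0).S w v) - L)
          ≤ α - (sg 0).S w w := fun t => by linarith [hkey t]
      have hD : ((sg 0).S v w + (sg 0).S w v) - L ≠ 0 :=
        sub_ne_zero.mpr (Ne.symm hne)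
      have := hall ((α - (sg 0).S w w + 1) / (((sg 0).S v w + (sg 0).S w v) - L))
      rw [div_mul_cancel₀ _ hD] at this
      linarith
    exact ⟨fun k => φ0 (ms1 (ms2 k)), hLd ▸ hdk⟩
  -- Final assembly.
  have hfinal_eq : ∀ n, (sg n).Sb β (vs n) (ws n) + (sg n).Sb β (ws n) (vs n)
      = 2 * β * ip (fr.ν n) (ws n) (vs n)
        + ((sg n).S (vs n) (ws n) + (sg n).S (ws n) (vs n)) := by
    intro n
    unfold Semigroup2.Sb
    rw [ip_comm (vs n) (ws n)]
    ring
  have hlim_eq : (sg 0).Sb β v w + (sg 0).Sb β w v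
      = 2 * β * ip (fr.ν 0) w v + ((sg 0).S v w + (sg 0).S w v) := by
    unfold Semigroup2.Sb
    rw [ip_comm v w]
    ring
  rw [hlim_eq]
  refine Tendsto.congr (fun n => (hfinal_eq n).symm) ?_
  exact (hcross.const_mul (2 * β)).add hdtend


end Mosco
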